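/- Let β ∈ [1,2), (c,b) ∈ C(β), ε > 0, and α ∈ A(c,b). Then there exist K ∈ ℕ and a K-feasible sequence α̃ ∈ A^{≤K}(c,b) such that |P(c,α) − P(c,α̃)| ≤ ε. -/

import Mathlib

/-- The binary entropy function, `h(p) = p log₂(1/p) + (1-p) log₂(1/(1-p))`,
with the convention `h(0) = h(1) = 0` (automatic since `1/0 = 0` and `logb 2 0 = 0`). -/
noncomputable def binH (p : ℝ) : ℝ :=
  p * Real.logb 2 (1 / p) + (1 - p) * Real.logb 2 (1 / (1 - p))

/-- `(c, b) ∈ C(β)`: `c : ℕ → [0,1]`, `∑ cᵢ/2ⁱ = 1/(β·2ᵇ)` and `∑ cᵢ ≤ 1`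
(the latter expressed via partial sums, which is equivalent for nonnegative terms). -/
def memC (β : ℝ) (c : ℕ → ℝ) (b : ℕ) : Prop :=
  (∀ i, c i ∈ Set.Icc (0 : ℝ) 1) ∧
  (∑' i : ℕ, c i / 2 ^ i) = 1 / (β * 2 ^ b) ∧
  ∀ n : ℕ, (∑ i ∈ Finset.range n, c i) ≤ 1

/-- `α ∈ A(c,b)`: `α : ℕ → [0,1]` with `∑ αᵢ cᵢ / 2ⁱ = 1/(β·2^{b+1})`. -/
def memA (β : ℝ) (b : ℕ) (c α : ℕ → ℝ) : Prop :=
  (∀ i, α i ∈ Set.Icc (0 : ℝ) 1) ∧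
  (∑' i : ℕ, α i * c i / 2 ^ i) = 1 / (β * 2 ^ (b + 1))

/-- `P(c,α) = ∑ h(αᵢ)·cᵢ − h(∑ αᵢ·cᵢ)`. -/
noncomputable def Pfun (c α : ℕ → ℝ) : ℝ :=
  (∑' i : ℕ, binH (α i) * c i) - binH (∑' i : ℕ, α i * c i)

/-- `sup_{α ∈ A(c,b)} P(c,α)`. -/
noncomputable def supP (β : ℝ) (b : ℕ) (c : ℕ → ℝ) : ℝ :=
  sSup {y | ∃ α, memA β b c α ∧ y = Pfun c α}

/-- `G(β) = inf_{(c,b) ∈ C(β)} sup_{α ∈ A(c,b)} P(c,α)`. -/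
noncomputable def Gfun (β : ℝ) : ℝ :=
  sInf {y | ∃ c b, memC β c b ∧ y = supP β b c}

/-- `(c,b)` is `k`-feasible: `cᵢ · β · 2ᵏ ∈ ℕ` for every `i`. -/
def kFeasC (β : ℝ) (k : ℕ) (c : ℕ → ℝ) : Prop :=
  ∀ i, ∃ m : ℕ, c i * (β * 2 ^ k) = m

/-- `α` is `k`-feasible (for `c`): `αᵢ · cᵢ · β · 2ᵏ ∈ ℕ` for every `i`, and if there is
a largest index `t` with `c t > 0` then `α t < 1`. -/
def kFeasA (β : ℝ) (k : ℕ) (c α : ℕ → ℝ) : Prop :=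
  (∀ i, ∃ m : ℕ, α i * c i * (β * 2 ^ k) = m) ∧
  (∀ t, 0 < c t → (∀ i, t < i → c i = 0) → α t < 1)

lemma binH_eq (p : ℝ) : binH p = Real.binEntropy p / Real.log 2 := by
  unfold binH Real.binEntropy
  rw [Real.logb, Real.logb, one_div, one_div]
  ring

lemma binH_continuous : Continuous binH := by
  have : binH = fun p => Real.binEntropy p / Real.log 2 := funext binH_eq
  rw [this]
  exact Real.binEntropy_continuous.div_const _

lemma binH_nonneg {p : ℝ} (h0 : 0 ≤ p) (h1 : p ≤ 1) : 0 ≤ binH p := by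
  rw [binH_eq]
  exact div_nonneg (Real.binEntropy_nonneg h0 h1) (Real.log_nonneg one_le_two)

lemma binH_le_one (p : ℝ) : binH p ≤ 1 := by
  rw [binH_eq, div_le_one (Real.log_pos one_lt_two)]
  exact Real.binEntropy_le_log_two

lemma binH_zero : binH 0 = 0 := by simp [binH_eq]

set_option maxHeartbeats 4000000 in
/-- Any `α ∈ A(c,b)` can be approximated in `P(c,·)`-value by a `K`-feasible sequence
in `A^{≤K}(c,b)`, for some `K`. -/
theorem approx_by_feasible_alpha (β : ℝ) (hβ : β ∈ Set.Ico (1 : ℝ) 2)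
    (c : ℕ → ℝ) (b : ℕ) (hC : memC β c b) (ε : ℝ) (hε : 0 < ε)
    (α : ℕ → ℝ) (hα : memA β b c α) :
    ∃ K : ℕ, ∃ αt : ℕ → ℝ, memA β b c αt ∧ (∀ i, K < i → αt i = 0) ∧
      kFeasA β K c αt ∧ |Pfun c α - Pfun c αt| ≤ ε := by
  classical
  obtain ⟨hβ1, hβ2⟩ := hβ
  obtain ⟨hc01, hcsum, hcpartial⟩ := hC
  obtain ⟨hα01, hαsum⟩ := hα
  have hβ0 : (0:ℝ) < β := lt_of_lt_of_le one_pos hβ1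
  have hc0 : ∀ i, 0 ≤ c i := fun i => (hc01 i).1
  have hc1 : ∀ i, c i ≤ 1 := fun i => (hc01 i).2
  have ha0 : ∀ i, 0 ≤ α i := fun i => (hα01 i).1
  have ha1 : ∀ i, α i ≤ 1 := fun i => (hα01 i).2
  set S : ℝ := 1 / (β * 2 ^ (b + 1)) with hSdef
  have hS0 : 0 < S := by positivity
  -- summabilities
  have sumc : Summable c := summable_of_sum_range_le hc0 hcpartial
  have hg0 : ∀ i, 0 ≤ α i * c i / 2 ^ i :=
    fun i => div_nonneg (mul_nonneg (ha0 i) (hc0 i)) (by positivity)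
  have sumg : Summable (fun i => α i * c i / 2 ^ i) := by
    apply Summable.of_nonneg_of_le hg0 (fun i => ?_) summable_geometric_two
    have h2 : (0:ℝ) < 2 ^ i := by positivity
    rw [div_le_iff₀ h2, one_div, inv_pow, inv_mul_cancel₀ (ne_of_gt h2)]
    nlinarith [hc0 i, hc1 i, ha0 i, ha1 i]
  have sumac : Summable (fun i => α i * c i) :=
    Summable.of_nonneg_of_le (fun i => mul_nonneg (ha0 i) (hc0 i))
      (fun i => by nlinarith [hc0 i, ha1 i, ha0 i, hc1 i]) sumc
  have sumh : Summable (fun i => binH (α i) * c i) := by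
    apply Summable.of_nonneg_of_le (fun i => mul_nonneg (binH_nonneg (ha0 i) (ha1 i)) (hc0 i))
      (fun i => ?_) sumc
    nlinarith [binH_le_one (α i), hc0 i, binH_nonneg (ha0 i) (ha1 i)]
  have htsc : (∑' i, c i) ≤ 1 := Real.tsum_le_of_sum_range_le hc0 hcpartial
  -- existence of j with c j > 0, α j ≤ 1/2
  have hexj : ∃ j, 0 < c j ∧ α j ≤ 1/2 := by
    by_contra hcon
    push_neg at hcon
    have sumf : Summable (fun i => c i / 2 ^ i) := by
      apply Summable.of_nonneg_of_le (fun i => div_nonneg (hc0 i) (by positivity))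
        (fun i => ?_) summable_geometric_two
      have h2 : (0:ℝ) < 2 ^ i := by positivity
      rw [div_le_iff₀ h2, one_div, inv_pow, inv_mul_cancel₀ (ne_of_gt h2)]
      exact hc1 i
    have hpt : ∀ i, c i / 2 ^ i / 2 ≤ α i * c i / 2 ^ i := by
      intro i
      rcases eq_or_lt_of_le (hc0 i) with h0 | h0
      · simp [← h0]
      · have hh := (hcon i h0).le
        have h2 : (0:ℝ) < 2 ^ i := by positivity
        rw [div_div, div_le_div_iff₀ (by positivity) h2]
        nlinarith [mul_pos h0 h2]
    -- difference is nonneg summable with zero tsum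
    set d : ℕ → ℝ := fun i => α i * c i / 2 ^ i - c i / 2 ^ i / 2 with hd
    have sumd : Summable d := sumg.sub (sumf.div_const 2)
    have hd0 : ∀ i, 0 ≤ d i := fun i => sub_nonneg.2 (hpt i)
    have htd : (∑' i, d i) = 0 := by
      have : (∑' i, d i) = S - S := by
        rw [hd, Summable.tsum_sub sumg (sumf.div_const 2), hαsum, tsum_div_const, hcsum]
        congr 1
        rw [hSdef]
        rw [pow_succ]
        field_simp
      simp [this]
    have hall : ∀ i, d i = 0 := by
      intro i
      have h1 : d i ≤ ∑' n, d n := Summable.le_tsum sumd i (fun m _ => hd0 m)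
      have := hd0 i
      linarith [htd ▸ h1]
    -- find i0 with c i0 > 0
    have hex0 : ∃ i, 0 < c i := by
      by_contra hz
      push_neg at hz
      have : ∀ i, c i = 0 := fun i => le_antisymm (hz i) (hc0 i)
      have : (∑' i, c i / 2 ^ i) = 0 := by simp [this]
      rw [hcsum] at this
      have : (0:ℝ) < 1 / (β * 2 ^ b) := by positivity
      linarith
    obtain ⟨i0, hi0⟩ := hex0
    have := hall i0
    rw [hd] at this
    simp only [sub_eq_zero] at this
    have h2 : (0:ℝ) < 2 ^ i0 := by positivity
    have : α i0 = 1/2 := by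
      field_simp at this
      nlinarith [mul_pos hi0 h2]
    have := hcon i0 hi0
    linarith
  obtain ⟨j, hcj, haj⟩ := hexj
  -- uniform continuity modulus on [0,1]
  have hUC : ∃ δ : ℝ, 0 < δ ∧ δ ≤ 1/2 ∧ ∀ x ∈ Set.Icc (0:ℝ) 1, ∀ y ∈ Set.Icc (0:ℝ) 1,
      |x - y| ≤ δ → |binH x - binH y| ≤ ε/4 := by
    have huc : UniformContinuousOn binH (Set.Icc 0 1) :=
      isCompact_Icc.uniformContinuousOn_of_continuous binH_continuous.continuousOn
    rw [Metric.uniformContinuousOn_iff] at huc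
    obtain ⟨δ', hδ'0, hδ'⟩ := huc (ε/4) (by positivity)
    refine ⟨min (δ'/2) (1/2), by positivity, min_le_right _ _, ?_⟩
    intro x hx y hy hxy
    have : dist x y < δ' := by
      rw [Real.dist_eq]
      calc |x - y| ≤ min (δ'/2) (1/2) := hxy
        _ ≤ δ'/2 := min_le_left _ _
        _ < δ' := by linarith
    have := hδ' x hx y hy this
    rw [Real.dist_eq] at this
    linarith
  obtain ⟨δ, hδ0, hδhalf, hδ⟩ := hUC
  -- choose L
  have hεL : (0:ℝ) < min (min (ε/4) (δ/4)) (δ * c j / 2 ^ (j + 4)) := by positivity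
  set εL : ℝ := min (min (ε/4) (δ/4)) (δ * c j / 2 ^ (j + 4)) with hεLdef
  have hLex : ∃ L : ℕ, j ≤ L ∧ (∑' k, c (k + (L+1))) ≤ εL := by
    have htend : Filter.Tendsto (fun n => ∑' k, c (k + n)) Filter.atTop (nhds 0) :=
      tendsto_sum_nat_add c
    have hev : ∀ᶠ n in Filter.atTop, (∑' k, c (k + n)) < εL :=
      htend.eventually_lt_const hεL
    obtain ⟨N, hN⟩ := Filter.eventually_atTop.1 hev
    exact ⟨max N j, le_max_right _ _, (hN (max N j + 1) (by omega)).le⟩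
  obtain ⟨L, hjL, hTC⟩ := hLex
  set TC : ℝ := ∑' k, c (k + (L+1)) with hTCdef
  have sumc' : Summable (fun k => c (k + (L+1))) := (summable_nat_add_iff (L+1)).2 sumc
  have sumg' : Summable (fun k => α (k+(L+1)) * c (k+(L+1)) / 2 ^ (k+(L+1))) :=
    (summable_nat_add_iff (L+1)).2 sumg
  have sumac' : Summable (fun k => α (k+(L+1)) * c (k+(L+1))) :=
    (summable_nat_add_iff (L+1)).2 sumac
  have sumh' : Summable (fun k => binH (α (k+(L+1))) * c (k+(L+1))) :=
    (summable_nat_add_iff (L+1)).2 sumh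
  have hTC0 : 0 ≤ TC := tsum_nonneg (fun k => hc0 _)
  -- tail of g
  set tailα : ℝ := ∑' k, α (k+(L+1)) * c (k+(L+1)) / 2 ^ (k+(L+1)) with htailαdef
  have htailα0 : 0 ≤ tailα := tsum_nonneg (fun k => hg0 _)
  have htail_le : tailα ≤ TC := by
    apply Summable.tsum_le_tsum _ sumg' sumc'
    intro k
    have h2 : (1:ℝ) ≤ 2 ^ (k + (L+1)) := one_le_pow₀ one_le_two
    have := hc0 (k+(L+1)); have := ha0 (k+(L+1)); have := ha1 (k+(L+1))
    rw [div_le_iff₀ (by positivity)]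
    nlinarith
  have hsplitg : (∑ i ∈ Finset.range (L+1), α i * c i / 2 ^ i) + tailα = S := by
    rw [htailαdef, Summable.sum_add_tsum_nat_add (L+1) sumg, hαsum]
  -- istar and Cm
  set s : Finset ℕ := (Finset.range (L+1)).filter (fun i => 0 < c i) with hsdef
  have hjs : j ∈ s := by
    rw [hsdef, Finset.mem_filter, Finset.mem_range]
    exact ⟨by omega, hcj⟩
  have hsne : s.Nonempty := ⟨j, hjs⟩
  set istar : ℕ := s.max' hsne with histardef
  have histar_mem : istar ∈ s := s.max'_mem hsne
  have histar_le : istar ≤ L := by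
    have := histar_mem
    rw [hsdef, Finset.mem_filter, Finset.mem_range] at this
    omega
  have hc_istar : 0 < c istar := by
    have := histar_mem
    rw [hsdef, Finset.mem_filter] at this
    exact this.2
  have hmaxs : ∀ i, i ≤ L → 0 < c i → i ≤ istar := by
    intro i hi hci
    exact s.le_max' i (by rw [hsdef, Finset.mem_filter, Finset.mem_range]; exact ⟨by omega, hci⟩)
  have hji : j ≤ istar := hmaxs j hjL hcj
  set Cm : ℝ := s.inf' hsne c with hCmdef
  have hCm0 : 0 < Cm := by
    rw [hCmdef, Finset.lt_inf'_iff]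
    intro i hi
    rw [hsdef, Finset.mem_filter] at hi
    exact hi.2
  have hCmle : ∀ i ∈ s, Cm ≤ c i := fun i hi => Finset.inf'_le c hi
  -- choose K
  have hKex : ∃ K : ℕ, b+1 ≤ K ∧ L ≤ K ∧
      (1 + 2^(istar+1) : ℝ) / (Cm * 2^K) ≤ δ/6 ∧
      (3 * 2^(j:ℕ) : ℝ) / (Cm * 2^K) ≤ δ/6 ∧
      (2^(istar+1) : ℝ) < Cm * 2^K := by
    obtain ⟨K1, hK1⟩ := pow_unbounded_of_one_lt ((1 + 2^(istar+1) : ℝ) * 6 / (δ * Cm)) (one_lt_two)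
    obtain ⟨K2, hK2⟩ := pow_unbounded_of_one_lt ((3 * 2^(j:ℕ) : ℝ) * 6 / (δ * Cm)) (one_lt_two)
    obtain ⟨K3, hK3⟩ := pow_unbounded_of_one_lt ((2^(istar+1) : ℝ) / Cm) (one_lt_two)
    refine ⟨max (max K1 K2) (max K3 (max (b+1) L)), by omega, by omega, ?_, ?_, ?_⟩
    · have hm : (2:ℝ)^K1 ≤ 2^(max (max K1 K2) (max K3 (max (b+1) L))) :=
        pow_le_pow_right₀ one_le_two (by omega)
      rw [div_le_iff₀ (by positivity)]
      rw [div_lt_iff₀ (by positivity)] at hK1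
      have h2 := mul_le_mul_of_nonneg_right hm (le_of_lt (mul_pos hδ0 hCm0))
      nlinarith
    · have hm : (2:ℝ)^K2 ≤ 2^(max (max K1 K2) (max K3 (max (b+1) L))) :=
        pow_le_pow_right₀ one_le_two (by omega)
      rw [div_le_iff₀ (by positivity)]
      rw [div_lt_iff₀ (by positivity)] at hK2
      have h2 := mul_le_mul_of_nonneg_right hm (le_of_lt (mul_pos hδ0 hCm0))
      nlinarith
    · have hm : (2:ℝ)^K3 ≤ 2^(max (max K1 K2) (max K3 (max (b+1) L))) :=
        pow_le_pow_right₀ one_le_two (by omega)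
      rw [div_lt_iff₀ hCm0] at hK3
      have h2 := mul_le_mul_of_nonneg_right hm hCm0.le
      nlinarith
  obtain ⟨K, hbK, hLK, hKa, hKb, hKc⟩ := hKex
  have hTCa : TC ≤ ε/4 := hTC.trans ((min_le_left _ _).trans (min_le_left _ _))
  have hTCb : TC ≤ δ/4 := hTC.trans ((min_le_left _ _).trans (min_le_right _ _))
  have hTCc : TC ≤ δ * c j / 2 ^ (j + 4) := hTC.trans (min_le_right _ _)
  have hCmle2 : ∀ i, i ≤ L → 0 < c i → Cm ≤ c i := by
    intro i hi hci
    exact hCmle i (by rw [hsdef, Finset.mem_filter, Finset.mem_range]; exact ⟨by omega, hci⟩)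
  -- the construction
  set M : ℕ → ℝ := fun i => c i * (β * 2^K) with hMdef
  have hMpos : ∀ i, 0 < c i → 0 < M i := fun i h => by
    have : (0:ℝ) < β * 2^K := by positivity
    exact mul_pos h this
  have hMnn : ∀ i, 0 ≤ M i := fun i => mul_nonneg (hc0 i) (by positivity)
  have hαM0 : ∀ i, 0 ≤ α i * M i := fun i => mul_nonneg (ha0 i) (hMnn i)
  set y0 : ℕ → ℕ := fun i => ⌊α i * M i⌋₊ with hy0def
  set Pu : ℕ := 2^(istar - j) with hPudef
  have hPu0 : 0 < Pu := Nat.pow_pos (by norm_num)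
  set base : ℕ → ℕ := fun i => if i = istar then y0 i - Pu else y0 i with hbasedef
  set T : ℕ := 2^(2*K - b - 1) with hTdef
  set Npre : ℕ := ∑ i ∈ Finset.range (L+1), base i * 2^(K - i) with hNpredef
  -- cast identities
  have hpowKi : ∀ i, i ≤ L → (2:ℝ)^(K-i) * 2^i = 2^K := by
    intro i hi
    rw [← pow_add]
    congr 1
    omega
  have hcastTS : (T:ℝ) = β * 2^(2*K) * S := by
    rw [hTdef, hSdef]
    push_cast
    have h1 : ((2:ℝ)^(2*K-b-1)) * 2^(b+1) = 2^(2*K) := by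
      rw [← pow_add]; congr 1; omega
    field_simp
    nlinarith [h1]
  have hy0le : ∀ i, (y0 i : ℝ) ≤ α i * M i := fun i => Nat.floor_le (hαM0 i)
  have hy0ge : ∀ i, α i * M i - 1 < (y0 i:ℝ) := by
    intro i
    have := Nat.lt_floor_add_one (α i * M i)
    push_cast at this ⊢
    linarith
  have hbase_le : ∀ i, (base i : ℝ) ≤ y0 i := by
    intro i
    simp only [hbasedef]
    by_cases h : i = istar <;> simp [h] <;> exact_mod_cast Nat.cast_le.2 (Nat.sub_le _ _)
  have hbase_ge : ∀ i, (y0 i:ℝ) - Pu ≤ base i := by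
    intro i
    simp only [hbasedef]
    by_cases h : i = istar
    · rw [if_pos h]
      by_cases h2 : Pu ≤ y0 i
      · rw [Nat.cast_sub h2]
      · push_neg at h2
        have h3 : y0 i - Pu = 0 := Nat.sub_eq_zero_of_le h2.le
        rw [h3]
        push_cast
        have : (y0 i : ℝ) < Pu := by exact_mod_cast h2
        linarith
    · simp only [if_neg h]
      have : (0:ℝ) ≤ Pu := by positivity
      linarith
  have hPucast : (Pu:ℝ) = 2^(istar - j) := by rw [hPudef]; push_cast; ring
  have hPule : (Pu:ℝ) ≤ 2^(istar+1) := by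
    rw [hPucast]
    exact pow_le_pow_right₀ one_le_two (by omega)
  -- window sum of g
  have hgwin : (∑ i ∈ Finset.range (L+1), α i * c i / 2 ^ i) = S - tailα := by linarith
  -- key term rewriting
  have h2Kpow : ((2:ℝ))^(2*K) = 2^K * 2^K := by rw [two_mul, pow_add]
  have hterm : ∀ i ∈ Finset.range (L+1), (α i * M i) * 2^(K-i) = β * 2^(2*K) * (α i * c i / 2^i) := by
    intro i hi
    rw [Finset.mem_range] at hi
    have hp := hpowKi i (by omega)
    have h2i : (0:ℝ) < 2^i := by positivity
    have hp2 : (2:ℝ)^(K-i) = 2^K / 2^i := by rw [eq_div_iff (ne_of_gt h2i)]; exact hp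
    rw [hMdef, hp2, h2Kpow]
    field_simp
  -- Npre ≤ T
  have hNpre_leR : (Npre:ℝ) ≤ β * 2^(2*K) * (S - tailα) := by
    rw [hNpredef]
    push_cast
    calc (∑ i ∈ Finset.range (L+1), (base i : ℝ) * 2^(K-i))
        ≤ ∑ i ∈ Finset.range (L+1), (α i * M i) * 2^(K-i) := by
          apply Finset.sum_le_sum
          intro i hi
          have h1 : (base i:ℝ) ≤ α i * M i := le_trans (hbase_le i) (hy0le i)
          exact mul_le_mul_of_nonneg_right h1 (by positivity)
      _ = ∑ i ∈ Finset.range (L+1), β * 2^(2*K) * (α i * c i / 2^i) := Finset.sum_congr rfl hterm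
      _ = β * 2^(2*K) * (S - tailα) := by rw [← Finset.mul_sum, hgwin]
  have hNpre_le : Npre ≤ T := by
    have h1 : (Npre:ℝ) ≤ (T:ℝ) := by
      rw [hcastTS]
      have : β * 2^(2*K) * (S - tailα) ≤ β * 2^(2*K) * S := by
        apply mul_le_mul_of_nonneg_left (by linarith) (by positivity)
      linarith
    exact_mod_cast h1
  -- lower bound on Npre
  have hsumpow : (∑ i ∈ Finset.range (L+1), (2:ℝ)^(K-i)) ≤ 2^(K+1) := by
    have h1 : ∀ i ∈ Finset.range (L+1), (2:ℝ)^(K-i) ≤ 2^K * (1/2)^i := by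
      intro i hi
      rw [Finset.mem_range] at hi
      have hp := hpowKi i (by omega)
      have h2i : (0:ℝ) < 2^i := by positivity
      have hp2 : (2:ℝ)^(K-i) = 2^K / 2^i := by rw [eq_div_iff (ne_of_gt h2i)]; exact hp
      rw [hp2, div_pow, one_pow, div_eq_mul_one_div]
    calc (∑ i ∈ Finset.range (L+1), (2:ℝ)^(K-i))
        ≤ ∑ i ∈ Finset.range (L+1), (2:ℝ)^K * (1/2)^i := Finset.sum_le_sum h1
      _ = 2^K * ∑ i ∈ Finset.range (L+1), ((1:ℝ)/2)^i := by rw [Finset.mul_sum]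
      _ ≤ 2^K * 2 := by
          have h2 : (∑ i ∈ Finset.range (L+1), ((1:ℝ)/2)^i) ≤ ∑' i:ℕ, ((1:ℝ)/2)^i :=
            Summable.sum_le_tsum _ (fun i _ => by positivity) summable_geometric_two
          rw [tsum_geometric_two] at h2
          nlinarith [pow_pos (zero_lt_two (α:=ℝ)) K]
      _ = 2^(K+1) := by rw [pow_succ]
  have hNpre_geR : β * 2^(2*K) * (S - tailα) - 3 * 2^K ≤ (Npre:ℝ) := by
    rw [hNpredef]
    push_cast
    have hstep : ∀ i ∈ Finset.range (L+1),
        (α i * M i) * 2^(K-i) - 2^(K-i) - (if i = istar then (Pu:ℝ) * 2^(K-istar) else 0)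
          ≤ (base i:ℝ) * 2^(K-i) := by
      intro i hi
      have h1 : α i * M i - 1 - (if i = istar then (Pu:ℝ) else 0) ≤ (base i:ℝ) := by
        by_cases h : i = istar
        · rw [if_pos h]
          have := hbase_ge i
          have := hy0ge i
          linarith
        · have hbi : (base i:ℝ) = y0 i := by simp only [hbasedef, if_neg h]
          rw [if_neg h, hbi]
          have := hy0ge i
          linarith
      have h2 : (0:ℝ) ≤ 2^(K-i) := by positivity
      by_cases h : i = istar
      · subst h
        rw [if_pos rfl] at h1 ⊢
        nlinarith [h1, h2]
      · rw [if_neg h] at h1 ⊢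
        nlinarith [h1, h2]
    have hsum1 : (∑ i ∈ Finset.range (L+1),
        ((α i * M i) * 2^(K-i) - 2^(K-i) - (if i = istar then (Pu:ℝ) * 2^(K-istar) else 0)))
        ≤ ∑ i ∈ Finset.range (L+1), (base i:ℝ) * 2^(K-i) := Finset.sum_le_sum hstep
    rw [Finset.sum_sub_distrib, Finset.sum_sub_distrib] at hsum1
    have hsum2 : (∑ i ∈ Finset.range (L+1), (α i * M i) * 2^(K-i)) = β * 2^(2*K) * (S - tailα) := by
      rw [Finset.sum_congr rfl hterm, ← Finset.mul_sum, hgwin]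
    have hsum3 : (∑ i ∈ Finset.range (L+1), (if i = istar then (Pu:ℝ) * 2^(K-istar) else 0))
        = (Pu:ℝ) * 2^(K-istar) := by
      rw [Finset.sum_ite_eq' (Finset.range (L+1)) istar (fun _ => (Pu:ℝ) * 2^(K-istar))]
      rw [if_pos (Finset.mem_range.2 (by omega))]
    have hPuK : (Pu:ℝ) * 2^(K-istar) ≤ 2^K := by
      rw [hPucast, ← pow_add]
      exact pow_le_pow_right₀ one_le_two (by omega)
    rw [hsum2, hsum3] at hsum1
    have := hsumpow
    have hpow1 : (2:ℝ)^(K+1) = 2 * 2^K := by rw [pow_succ]; ring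
    linarith
  set D : ℕ := T - Npre with hDdef
  have hDcast : (D:ℝ) = (T:ℝ) - Npre := Nat.cast_sub hNpre_le
  have hDle : (D:ℝ) ≤ β * 2^(2*K) * tailα + 3 * 2^K := by
    rw [hDcast, hcastTS]
    nlinarith [hNpre_geR]
  -- divisibility
  have hdvdT : 2^(K-istar) ∣ T := by
    rw [hTdef]
    exact pow_dvd_pow 2 (by omega)
  have hdvdN : 2^(K-istar) ∣ Npre := by
    rw [hNpredef]
    apply Finset.dvd_sum
    intro i hi
    rw [Finset.mem_range] at hi
    by_cases hci : 0 < c i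
    · have hii : i ≤ istar := hmaxs i (by omega) hci
      exact Dvd.dvd.mul_left (pow_dvd_pow 2 (by omega)) _
    · have hczero : c i = 0 := le_antisymm (not_lt.1 hci) (hc0 i)
      have hMi : M i = 0 := by rw [hMdef]; simp [hczero]
      have hy0i : y0 i = 0 := by
        rw [hy0def]
        simp [hMi]
      have hbi : base i = 0 := by
        have hne : i ≠ istar := by
          intro h
          rw [h] at hczero
          exact absurd hczero (ne_of_gt hc_istar)
        simp only [hbasedef, if_neg hne, hy0i]
      rw [hbi, zero_mul]
      exact dvd_zero _
  have hdvdD : 2^(K-istar) ∣ D := by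
    rw [hDdef]
    exact Nat.dvd_sub hdvdT hdvdN
  set E : ℕ := D / 2^(K-istar) with hEdef
  have hED : E * 2^(K-istar) = D := Nat.div_mul_cancel hdvdD
  set q : ℕ := E / Pu with hqdef
  set r : ℕ := E % Pu with hrdef
  have hqr : Pu * q + r = E := Nat.div_add_mod E Pu
  have hrlt : r < Pu := Nat.mod_lt _ hPu0
  set y : ℕ → ℕ := fun i => base i + (if i = j then q else 0) + (if i = istar then r else 0) with hydef
  set αt : ℕ → ℝ := fun i => if i ≤ L then (y i:ℝ) / M i else 0 with hαtdef
  have hy_czero : ∀ i, c i = 0 → y i = 0 := by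
    intro i hcz
    have hMi : M i = 0 := by rw [hMdef]; simp [hcz]
    have hy0i : y0 i = 0 := by simp only [hy0def]; simp [hMi]
    have hnej : i ≠ j := fun h => absurd hcz (by rw [h]; exact ne_of_gt hcj)
    have hnei : i ≠ istar := fun h => absurd hcz (by rw [h]; exact ne_of_gt hc_istar)
    simp only [hydef, hbasedef, if_neg hnej, if_neg hnei, hy0i]
  have hjmem : j ∈ Finset.range (L+1) := Finset.mem_range.2 (by omega)
  have himem : istar ∈ Finset.range (L+1) := Finset.mem_range.2 (by omega)
  -- the exact integer sum
  have hNsum : (∑ i ∈ Finset.range (L+1), y i * 2^(K-i)) = T := by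
    have hexp : ∀ i ∈ Finset.range (L+1), y i * 2^(K-i)
        = base i * 2^(K-i) + (if i = j then q * 2^(K-i) else 0)
          + (if i = istar then r * 2^(K-i) else 0) := by
      intro i hi
      simp only [hydef]
      by_cases h1 : i = j <;> by_cases h2 : i = istar <;>
        simp [h1, h2, add_mul]
    rw [Finset.sum_congr rfl hexp]
    rw [Finset.sum_add_distrib, Finset.sum_add_distrib]
    rw [Finset.sum_ite_eq' (Finset.range (L+1)) j (fun i => q * 2^(K-i)), if_pos hjmem]
    rw [Finset.sum_ite_eq' (Finset.range (L+1)) istar (fun i => r * 2^(K-i)), if_pos himem]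
    have hqpow : q * 2^(K-j) = q * Pu * 2^(K-istar) := by
      rw [hPudef, mul_assoc, ← pow_add]
      congr 2
      omega
    have : Npre + (q * 2^(K-j) + r * 2^(K-istar)) = Npre + D := by
      congr 1
      rw [hqpow]
      calc q * Pu * 2^(K-istar) + r * 2^(K-istar) = (Pu * q + r) * 2^(K-istar) := by ring
        _ = E * 2^(K-istar) := by rw [hqr]
        _ = D := hED
    rw [← hNpredef] at *
    omega
  -- the real sum over the window equals S
  have hsum_real : (∑ i ∈ Finset.range (L+1), αt i * c i / 2 ^ i) = S := by
    have hptw : ∀ i ∈ Finset.range (L+1), αt i * c i / 2 ^ i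
        = ((y i * 2^(K-i) : ℕ) : ℝ) / (β * 2^(2*K)) := by
      intro i hi
      rw [Finset.mem_range] at hi
      have hiL : i ≤ L := by omega
      have hαti : αt i = (y i:ℝ) / M i := by simp only [hαtdef, if_pos hiL]
      by_cases hci : 0 < c i
      · have hMi := hMpos i hci
        have h2i : (0:ℝ) < 2^i := by positivity
        have hp := hpowKi i hiL
        rw [hαti, hMdef]
        push_cast
        rw [h2Kpow, ← hp]
        field_simp
      · have hcz : c i = 0 := le_antisymm (not_lt.1 hci) (hc0 i)
        rw [hy_czero i hcz, hcz]
        push_cast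
        simp
    rw [Finset.sum_congr rfl hptw, ← Finset.sum_div, ← Nat.cast_sum, hNsum]
    rw [hcastTS]
    field_simp
  -- the tsum for αt
  have hαt_zero : ∀ i, ¬ (i ≤ L) → αt i = 0 := by
    intro i hi
    simp only [hαtdef, if_neg hi]
  have hαtsum : (∑' i, αt i * c i / 2 ^ i) = S := by
    rw [tsum_eq_sum (s := Finset.range (L+1)) ?_]
    · exact hsum_real
    · intro i hi
      rw [Finset.mem_range] at hi
      rw [hαt_zero i (by omega), zero_mul, zero_div]
  -- bounds on q
  have h2K : (0:ℝ) < 2^K := by positivity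
  have hpowKj : (2:ℝ)^(K-j) * 2^j = 2^K := hpowKi j hjL
  have hqPu : q * Pu ≤ E := by
    rw [mul_comm]
    exact Nat.le.intro hqr
  have hqD : q * 2^(K-j) ≤ D := by
    have hqpow : q * 2^(K-j) = q * Pu * 2^(K-istar) := by
      rw [hPudef, mul_assoc, ← pow_add]
      congr 2
      omega
    rw [hqpow]
    calc q * Pu * 2^(K-istar) ≤ E * 2^(K-istar) := Nat.mul_le_mul_right _ hqPu
      _ = D := hED
  have hq_cast : (q:ℝ) * 2^(K-j) ≤ (D:ℝ) := by exact_mod_cast hqD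
  have hq4 : (q:ℝ) ≤ β * 2^K * tailα * 2^j + 3 * 2^j := by
    have e1 : (q:ℝ) * 2^K = (q * 2^(K-j)) * 2^j := by rw [mul_assoc, hpowKj]
    have e2 : ((q:ℝ) * 2^(K-j)) * 2^j ≤ (D:ℝ) * 2^j :=
      mul_le_mul_of_nonneg_right hq_cast (by positivity)
    have e3 : (D:ℝ) * 2^j ≤ (β * 2^(2*K) * tailα + 3 * 2^K) * 2^j :=
      mul_le_mul_of_nonneg_right hDle (by positivity)
    have e4 : (β * 2^(2*K) * tailα + 3 * 2^K) * 2^j = (β * 2^K * tailα * 2^j + 3 * 2^j) * 2^K := by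
      rw [h2Kpow]; ring
    have e5 : (q:ℝ) * 2^K ≤ (β * 2^K * tailα * 2^j + 3 * 2^j) * 2^K := by
      linarith only [e1, e2, e3, e4]
    exact le_of_mul_le_mul_right e5 h2K
  have hcjCm : Cm ≤ c j := hCmle2 j hjL hcj
  have htail16 : tailα ≤ δ * c j / 2^(j+4) := le_trans htail_le hTCc
  have hpow4 : (2:ℝ)^(j+4) = 2^j * 16 := by rw [pow_add]; norm_num
  have h2j : (0:ℝ) < 2^j := by positivity
  have t1 : β * 2^K * tailα * 2^j ≤ δ/16 * (c j * (β * 2^K)) := by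
    have s1 : tailα * 2^j ≤ δ * c j / 16 := by
      rw [hpow4] at htail16
      have s1a : tailα * 2^j ≤ (δ * c j / (2^j * 16)) * 2^j :=
        mul_le_mul_of_nonneg_right htail16 (by positivity)
      have e : (δ * c j / (2^j * 16)) * 2^j = δ * c j / 16 := by
        field_simp
      linarith only [s1a, e]
    have s2 : β * 2^K * (tailα * 2^j) ≤ β * 2^K * (δ * c j / 16) :=
      mul_le_mul_of_nonneg_left s1 (by positivity)
    have e : β * 2^K * (δ * c j / 16) = δ/16 * (c j * (β * 2^K)) := by ring
    have e2 : β * 2^K * tailα * 2^j = β * 2^K * (tailα * 2^j) := by ring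
    linarith only [s2, e, e2]
  have hKb2 : (3 * 2^(j:ℕ) : ℝ) ≤ δ/6 * (Cm * 2^K) := by
    have hKbc := hKb
    rw [div_le_iff₀ (by positivity : (0:ℝ) < Cm * 2^K)] at hKbc
    linarith only [hKbc]
  have hCm2K : (0:ℝ) < Cm * 2^K := by positivity
  have hMoverCm : Cm * 2^K ≤ c j * (β * 2^K) := by
    have u1 : Cm * 2^K ≤ c j * 2^K := mul_le_mul_of_nonneg_right hcjCm h2K.le
    have u2 : c j * 2^K * 1 ≤ c j * 2^K * β :=
      mul_le_mul_of_nonneg_left hβ1 (mul_nonneg (hc0 j) h2K.le)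
    have e : c j * 2^K * β = c j * (β * 2^K) := by ring
    linarith only [u1, u2, e]
  have t2 : 3 * (2:ℝ)^j ≤ δ/6 * (c j * (β * 2^K)) := by
    have h5 : δ/6 * (Cm * 2^K) ≤ δ/6 * (c j * (β * 2^K)) :=
      mul_le_mul_of_nonneg_left hMoverCm (by positivity)
    linarith only [hKb2, h5]
  have hqMj : (q:ℝ) ≤ (δ/16 + δ/6) * M j := by
    show (q:ℝ) ≤ (δ/16 + δ/6) * (c j * (β * 2^K))
    have e : (δ/16 + δ/6) * (c j * (β * 2^K))
        = δ/16 * (c j * (β * 2^K)) + δ/6 * (c j * (β * 2^K)) := by ring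
    linarith only [hq4, t1, t2, e]
  -- cast of y
  have hycast : ∀ i, (y i:ℝ)
      = (base i:ℝ) + (if i = j then (q:ℝ) else 0) + (if i = istar then (r:ℝ) else 0) := by
    intro i
    simp only [hydef]
    by_cases h1 : i = j <;> by_cases h2 : i = istar <;> simp [h1, h2]
  have hrPu : (r:ℝ) ≤ (Pu:ℝ) - 1 := by
    have : (r:ℝ) + 1 ≤ Pu := by exact_mod_cast hrlt
    linarith only [this]
  have hq0 : (0:ℝ) ≤ q := Nat.cast_nonneg q
  have hr0 : (0:ℝ) ≤ r := Nat.cast_nonneg r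
  have hPu1 : (1:ℝ) ≤ Pu := by exact_mod_cast hPu0
  -- numerator bound
  have hnum : ∀ i, |(y i:ℝ) - α i * M i| ≤ 1 + Pu + (if i = j then (q:ℝ) else 0) := by
    intro i
    have hyc := hycast i
    have hb1 : (base i:ℝ) ≤ α i * M i := (hbase_le i).trans (hy0le i)
    have hb2 : α i * M i - 1 - Pu ≤ (base i:ℝ) := by
      linarith only [hbase_ge i, hy0ge i]
    have hiq0 : (0:ℝ) ≤ (if i = j then (q:ℝ) else 0) := by split_ifs <;> simp [hq0]
    have hir1 : (if i = istar then (r:ℝ) else 0) ≤ (Pu:ℝ) - 1 := by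
      split_ifs
      · exact hrPu
      · linarith only [hPu1]
    have hir0 : (0:ℝ) ≤ (if i = istar then (r:ℝ) else 0) := by split_ifs <;> simp [hr0]
    rw [abs_le]
    constructor
    · linarith only [hyc, hb2, hiq0, hir0, hPu1]
    · linarith only [hyc, hb1, hir1]
  -- lower bound on M i
  have hMlb : ∀ i, i ≤ L → 0 < c i → Cm * 2^K ≤ M i := by
    intro i hiL hci
    show Cm * 2^K ≤ c i * (β * 2^K)
    have u1 : Cm * 2^K ≤ c i * 2^K := mul_le_mul_of_nonneg_right (hCmle2 i hiL hci) h2K.le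
    have u2 : c i * 2^K * 1 ≤ c i * 2^K * β :=
      mul_le_mul_of_nonneg_left hβ1 (mul_nonneg (hc0 i) h2K.le)
    have e : c i * 2^K * β = c i * (β * 2^K) := by ring
    linarith only [u1, u2, e]
  -- the perturbation bound
  have hpert : ∀ i, i ≤ L → 0 < c i → |αt i - α i| ≤ δ/2 := by
    intro i hiL hci
    have hMi := hMpos i hci
    have hαti : αt i = (y i:ℝ) / M i := by simp only [hαtdef, if_pos hiL]
    have habs : |αt i - α i| = |(y i:ℝ) - α i * M i| / M i := by
      have e : αt i - α i = ((y i:ℝ) - α i * M i) / M i := by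
        rw [hαti]
        field_simp
      rw [e, abs_div, abs_of_pos hMi]
    rw [habs]
    have hnumi := hnum i
    have hMi_lb := hMlb i hiL hci
    by_cases h1 : i = j
    · subst h1
      rw [if_pos rfl] at hnumi
      have s0 : |(y i:ℝ) - α i * M i| / M i ≤ (1 + (Pu:ℝ)) / M i + (q:ℝ) / M i := by
        rw [← add_div]
        exact (div_le_div_iff_of_pos_right hMi).2 (by linarith only [hnumi])
      have s1 : (1 + (Pu:ℝ)) / M i ≤ (1 + 2^(istar+1)) / (Cm * 2^K) :=
        div_le_div₀ (by positivity) (by linarith only [hPule]) hCm2K hMi_lb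
      have s2 : (q:ℝ) / M i ≤ δ/16 + δ/6 := by
        rw [div_le_iff₀ hMi]
        linarith only [hqMj]
      linarith only [s0, s1, s2, hKa, hδ0]
    · rw [if_neg h1, add_zero] at hnumi
      have s1 : |(y i:ℝ) - α i * M i| / M i ≤ (1 + 2^(istar+1)) / (Cm * 2^K) := by
        apply div_le_div₀ (by positivity) _ hCm2K hMi_lb
        linarith only [hnumi, hPule]
      linarith only [s1, hKa, hδ0]
  -- range facts
  have hαt_nonneg : ∀ i, 0 ≤ αt i := by
    intro i
    simp only [hαtdef]
    split_ifs with h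
    · exact div_nonneg (Nat.cast_nonneg _) (hMnn i)
    · exact le_refl 0
  have hαtj_lt : αt j < 1 := by
    have hp := hpert j hjL hcj
    have h2 := (abs_le.1 hp).1
    have h3 := (abs_le.1 hp).2
    linarith only [h3, haj, hδhalf, hδ0]
  have hαti_lt : αt istar < 1 := by
    by_cases hij : istar = j
    · rw [hij]; exact hαtj_lt
    · have hMi := hMpos istar hc_istar
      have hαti : αt istar = (y istar:ℝ) / M istar := by simp only [hαtdef, if_pos histar_le]
      rw [hαti, div_lt_one hMi]
      have hyc := hycast istar
      rw [if_neg hij, if_pos rfl, add_zero] at hyc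
      have hαM_le : α istar * M istar ≤ M istar :=
        mul_le_of_le_one_left (hMnn istar) (ha1 istar)
      by_cases hcase : Pu ≤ y0 istar
      · have hbi : (base istar:ℝ) = (y0 istar:ℝ) - Pu := by
          simp only [hbasedef, if_pos rfl]
          exact Nat.cast_sub hcase
        linarith only [hyc, hbi, hrPu, hy0le istar, hαM_le]
      · have hbz : base istar = 0 := by
          simp only [hbasedef, if_pos rfl]
          exact Nat.sub_eq_zero_of_le (le_of_not_ge hcase)
        rw [hbz] at hyc
        push_cast at hyc
        have hMi_lb := hMlb istar histar_le hc_istar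
        linarith only [hyc, hrPu, hPule, hKc, hMi_lb]
  have hαt_le_one : ∀ i, αt i ≤ 1 := by
    intro i
    by_cases hiL : i ≤ L
    · by_cases hci : 0 < c i
      · by_cases h1 : i = j
        · subst h1; exact hαtj_lt.le
        · by_cases h2 : i = istar
          · subst h2; exact hαti_lt.le
          · have hMi := hMpos i hci
            have hαti : αt i = (y i:ℝ) / M i := by simp only [hαtdef, if_pos hiL]
            rw [hαti, div_le_one hMi]
            have hyc := hycast i
            rw [if_neg h1, if_neg h2, add_zero, add_zero] at hyc
            have hbi : (base i:ℝ) = y0 i := by simp only [hbasedef, if_neg h2]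
            have hαM_le : α i * M i ≤ M i := mul_le_of_le_one_left (hMnn i) (ha1 i)
            linarith only [hyc, hbi, hy0le i, hαM_le]
      · have hcz : c i = 0 := le_antisymm (not_lt.1 hci) (hc0 i)
        have hz : αt i = 0 := by
          simp only [hαtdef, if_pos hiL, hy_czero i hcz]
          simp
        rw [hz]
        norm_num
    · rw [hαt_zero i hiL]
      norm_num
  -- feasibility
  have hfeas : ∀ i, ∃ m : ℕ, αt i * c i * (β * 2^K) = m := by
    intro i
    by_cases hiL : i ≤ L
    · by_cases hci : 0 < c i
      · refine ⟨y i, ?_⟩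
        have hMi := hMpos i hci
        have hαti : αt i = (y i:ℝ) / M i := by simp only [hαtdef, if_pos hiL]
        rw [hαti]
        calc (y i:ℝ)/M i * c i * (β * 2^K) = (y i:ℝ)/M i * (c i * (β * 2^K)) := by ring
          _ = (y i:ℝ)/M i * M i := rfl
          _ = y i := div_mul_cancel₀ _ (ne_of_gt hMi)
      · have hcz : c i = 0 := le_antisymm (not_lt.1 hci) (hc0 i)
        exact ⟨0, by rw [hcz]; simp⟩
    · exact ⟨0, by rw [hαt_zero i hiL]; simp⟩
  -- strictness
  have hstrict : ∀ t, 0 < c t → (∀ i, t < i → c i = 0) → αt t < 1 := by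
    intro t hct hbig
    by_cases htL : t ≤ L
    · have h1 : t ≤ istar := hmaxs t htL hct
      have h2 : istar ≤ t := by
        by_contra h
        push_neg at h
        exact absurd (hbig istar h) (ne_of_gt hc_istar)
      have ht : t = istar := le_antisymm h1 h2
      rw [ht]
      exact hαti_lt
    · rw [hαt_zero t htL]
      norm_num
  -- final estimates
  have hHαt_eq : (∑' i, binH (αt i) * c i) = ∑ i ∈ Finset.range (L+1), binH (αt i) * c i := by
    apply tsum_eq_sum
    intro i hi
    rw [Finset.mem_range] at hi
    rw [hαt_zero i (by omega), binH_zero, zero_mul]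
  have hHα_split : (∑' i, binH (α i) * c i)
      = (∑ i ∈ Finset.range (L+1), binH (α i) * c i)
        + ∑' k, binH (α (k+(L+1))) * c (k+(L+1)) :=
    (Summable.sum_add_tsum_nat_add (L+1) sumh).symm
  have hTH0 : 0 ≤ ∑' k, binH (α (k+(L+1))) * c (k+(L+1)) :=
    tsum_nonneg (fun k => mul_nonneg (binH_nonneg (ha0 _) (ha1 _)) (hc0 _))
  have hTHle : (∑' k, binH (α (k+(L+1))) * c (k+(L+1))) ≤ TC := by
    rw [hTCdef]
    exact Summable.tsum_le_tsum (fun k => mul_le_of_le_one_left (hc0 _) (binH_le_one _)) sumh' sumc'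
  have hsumcL : (∑ i ∈ Finset.range (L+1), c i) ≤ 1 := hcpartial (L+1)
  have hterm_h : ∀ i ∈ Finset.range (L+1), |(binH (α i) - binH (αt i)) * c i| ≤ ε/4 * c i := by
    intro i hi
    rw [Finset.mem_range] at hi
    have hiL : i ≤ L := by omega
    rw [abs_mul, abs_of_nonneg (hc0 i)]
    by_cases hci : 0 < c i
    · have hd := hpert i hiL hci
      have h1 : |binH (α i) - binH (αt i)| ≤ ε/4 := by
        apply hδ (α i) ⟨ha0 i, ha1 i⟩ (αt i) ⟨hαt_nonneg i, hαt_le_one i⟩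
        rw [abs_sub_comm] at hd ⊢
        rw [abs_sub_comm] at hd
        linarith only [hd, hδhalf, hδ0]
      exact mul_le_mul_of_nonneg_right h1 (hc0 i)
    · have hcz : c i = 0 := le_antisymm (not_lt.1 hci) (hc0 i)
      rw [hcz]
      simp
  have hwin : |∑ i ∈ Finset.range (L+1), (binH (α i) - binH (αt i)) * c i| ≤ ε/4 := by
    calc |∑ i ∈ Finset.range (L+1), (binH (α i) - binH (αt i)) * c i|
        ≤ ∑ i ∈ Finset.range (L+1), |(binH (α i) - binH (αt i)) * c i| :=
          Finset.abs_sum_le_sum_abs _ _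
      _ ≤ ∑ i ∈ Finset.range (L+1), ε/4 * c i := Finset.sum_le_sum hterm_h
      _ = ε/4 * ∑ i ∈ Finset.range (L+1), c i := by rw [Finset.mul_sum]
      _ ≤ ε/4 * 1 := mul_le_mul_of_nonneg_left hsumcL (by positivity)
      _ = ε/4 := mul_one _
  have hsum_sub : (∑ i ∈ Finset.range (L+1), binH (α i) * c i)
      - (∑ i ∈ Finset.range (L+1), binH (αt i) * c i)
      = ∑ i ∈ Finset.range (L+1), (binH (α i) - binH (αt i)) * c i := by
    rw [← Finset.sum_sub_distrib]
    exact Finset.sum_congr rfl (fun i _ => by ring)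
  have hHdiff : |(∑' i, binH (α i) * c i) - (∑' i, binH (αt i) * c i)| ≤ ε/2 := by
    rw [hHα_split, hHαt_eq]
    have e : (∑ i ∈ Finset.range (L+1), binH (α i) * c i)
        + (∑' k, binH (α (k+(L+1))) * c (k+(L+1)))
        - (∑ i ∈ Finset.range (L+1), binH (αt i) * c i)
        = (∑ i ∈ Finset.range (L+1), (binH (α i) - binH (αt i)) * c i)
          + (∑' k, binH (α (k+(L+1))) * c (k+(L+1))) := by
      rw [← hsum_sub]
      ring
    rw [e]
    calc |(∑ i ∈ Finset.range (L+1), (binH (α i) - binH (αt i)) * c i)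
        + (∑' k, binH (α (k+(L+1))) * c (k+(L+1)))|
        ≤ |∑ i ∈ Finset.range (L+1), (binH (α i) - binH (αt i)) * c i|
          + |∑' k, binH (α (k+(L+1))) * c (k+(L+1))| := abs_add_le _ _
      _ ≤ ε/4 + ε/4 := by
          apply add_le_add hwin
          rw [abs_of_nonneg hTH0]
          linarith only [hTHle, hTCa]
      _ = ε/2 := by ring
  -- the sums αc
  have hp0mem : (∑' i, α i * c i) ∈ Set.Icc (0:ℝ) 1 := by
    constructor
    · exact tsum_nonneg (fun i => mul_nonneg (ha0 i) (hc0 i))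
    · exact le_trans (Summable.tsum_le_tsum (fun i => mul_le_of_le_one_left (hc0 i) (ha1 i)) sumac sumc) htsc
  have hpt_eq : (∑' i, αt i * c i) = ∑ i ∈ Finset.range (L+1), αt i * c i := by
    apply tsum_eq_sum
    intro i hi
    rw [Finset.mem_range] at hi
    rw [hαt_zero i (by omega), zero_mul]
  have hptmem : (∑' i, αt i * c i) ∈ Set.Icc (0:ℝ) 1 := by
    rw [hpt_eq]
    constructor
    · exact Finset.sum_nonneg (fun i _ => mul_nonneg (hαt_nonneg i) (hc0 i))
    · calc (∑ i ∈ Finset.range (L+1), αt i * c i)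
          ≤ ∑ i ∈ Finset.range (L+1), c i :=
            Finset.sum_le_sum (fun i _ => mul_le_of_le_one_left (hc0 i) (hαt_le_one i))
        _ ≤ 1 := hsumcL
  have hsplit_ac : (∑' i, α i * c i)
      = (∑ i ∈ Finset.range (L+1), α i * c i) + ∑' k, α (k+(L+1)) * c (k+(L+1)) :=
    (Summable.sum_add_tsum_nat_add (L+1) sumac).symm
  have hTac0 : 0 ≤ ∑' k, α (k+(L+1)) * c (k+(L+1)) :=
    tsum_nonneg (fun k => mul_nonneg (ha0 _) (hc0 _))
  have hTacle : (∑' k, α (k+(L+1)) * c (k+(L+1))) ≤ TC := by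
    rw [hTCdef]
    exact Summable.tsum_le_tsum (fun k => mul_le_of_le_one_left (hc0 _) (ha1 _)) sumac' sumc'
  have hterm_a : ∀ i ∈ Finset.range (L+1), |(α i - αt i) * c i| ≤ δ/2 * c i := by
    intro i hi
    rw [Finset.mem_range] at hi
    have hiL : i ≤ L := by omega
    rw [abs_mul, abs_of_nonneg (hc0 i)]
    by_cases hci : 0 < c i
    · have hd := hpert i hiL hci
      rw [abs_sub_comm] at hd
      exact mul_le_mul_of_nonneg_right hd (hc0 i)
    · have hcz : c i = 0 := le_antisymm (not_lt.1 hci) (hc0 i)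
      rw [hcz]
      simp
  have hwina : |∑ i ∈ Finset.range (L+1), (α i - αt i) * c i| ≤ δ/2 := by
    calc |∑ i ∈ Finset.range (L+1), (α i - αt i) * c i|
        ≤ ∑ i ∈ Finset.range (L+1), |(α i - αt i) * c i| := Finset.abs_sum_le_sum_abs _ _
      _ ≤ ∑ i ∈ Finset.range (L+1), δ/2 * c i := Finset.sum_le_sum hterm_a
      _ = δ/2 * ∑ i ∈ Finset.range (L+1), c i := by rw [Finset.mul_sum]
      _ ≤ δ/2 * 1 := mul_le_mul_of_nonneg_left hsumcL (by positivity)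
      _ = δ/2 := mul_one _
  have hsum_sub_a : (∑ i ∈ Finset.range (L+1), α i * c i)
      - (∑ i ∈ Finset.range (L+1), αt i * c i)
      = ∑ i ∈ Finset.range (L+1), (α i - αt i) * c i := by
    rw [← Finset.sum_sub_distrib]
    exact Finset.sum_congr rfl (fun i _ => by ring)
  have hpdiff : |(∑' i, α i * c i) - (∑' i, αt i * c i)| ≤ δ := by
    rw [hsplit_ac, hpt_eq]
    have e : (∑ i ∈ Finset.range (L+1), α i * c i) + (∑' k, α (k+(L+1)) * c (k+(L+1)))
        - (∑ i ∈ Finset.range (L+1), αt i * c i)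
        = (∑ i ∈ Finset.range (L+1), (α i - αt i) * c i)
          + (∑' k, α (k+(L+1)) * c (k+(L+1))) := by
      rw [← hsum_sub_a]
      ring
    rw [e]
    calc |(∑ i ∈ Finset.range (L+1), (α i - αt i) * c i)
        + (∑' k, α (k+(L+1)) * c (k+(L+1)))|
        ≤ |∑ i ∈ Finset.range (L+1), (α i - αt i) * c i|
          + |∑' k, α (k+(L+1)) * c (k+(L+1))| := abs_add_le _ _
      _ ≤ δ/2 + δ/4 := by
          apply add_le_add hwina
          rw [abs_of_nonneg hTac0]
          linarith only [hTacle, hTCb]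
      _ ≤ δ := by linarith only [hδ0]
  have hbinHp : |binH (∑' i, α i * c i) - binH (∑' i, αt i * c i)| ≤ ε/4 :=
    hδ _ hp0mem _ hptmem hpdiff
  have hfinal : |((∑' i, binH (α i) * c i) - binH (∑' i, α i * c i))
      - ((∑' i, binH (αt i) * c i) - binH (∑' i, αt i * c i))| ≤ ε := by
    have e : ((∑' i, binH (α i) * c i) - binH (∑' i, α i * c i))
        - ((∑' i, binH (αt i) * c i) - binH (∑' i, αt i * c i))
        = ((∑' i, binH (α i) * c i) - (∑' i, binH (αt i) * c i))
          - (binH (∑' i, α i * c i) - binH (∑' i, αt i * c i)) := by ring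
    rw [e]
    calc |((∑' i, binH (α i) * c i) - (∑' i, binH (αt i) * c i))
        - (binH (∑' i, α i * c i) - binH (∑' i, αt i * c i))|
        ≤ |(∑' i, binH (α i) * c i) - (∑' i, binH (αt i) * c i)|
          + |binH (∑' i, α i * c i) - binH (∑' i, αt i * c i)| := abs_sub _ _
      _ ≤ ε/2 + ε/4 := add_le_add hHdiff hbinHp
      _ ≤ ε := by linarith only [hε]
  refine ⟨K, αt, ⟨fun i => Set.mem_Icc.2 ⟨hαt_nonneg i, hαt_le_one i⟩, ?_⟩, ?_, ⟨hfeas, hstrict⟩, ?_⟩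
  · rw [← hSdef]
    exact hαtsum
  · intro i hi
    exact hαt_zero i (by omega)
  · show |((∑' i, binH (α i) * c i) - binH (∑' i, α i * c i))
      - ((∑' i, binH (αt i) * c i) - binH (∑' i, αt i * c i))| ≤ ε
    exact hfinal
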